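/- Let σ* = (x*, y*) be a Nash equilibrium of the game given by U, let μ > 0, let σ^r ∈ Δ^n × Δ^m be a reference profile, and let σ̂ = (x̂, ŷ) be a saddle point of the corresponding SCCP. Suppose C > 0 satisfies C·‖σ* − σ^r‖₂ ≤ ε(σ^r). Then for every profile σ ∈ Δ^n × Δ^m, ‖σ* − σ‖₂ ≤ ε(σ^r)/C + ‖σ̂ − σ‖₂. -/
import Mathlib


open Finset

/-- Squared Euclidean norm of a vector. -/
noncomputable def sqnorm {k : ℕ} (v : Fin k → ℝ) : ℝ := ∑ i, (v i) ^ 2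

/-- Euclidean norm of a concatenated profile vector in ℝ^(k+l). -/
noncomputable def pnorm {k l : ℕ} (v : Fin k → ℝ) (w : Fin l → ℝ) : ℝ :=
  Real.sqrt (sqnorm v + sqnorm w)

/-- Bilinear payoff xᵀUy. -/
def payoff {k l : ℕ} (U : Matrix (Fin k) (Fin l) ℝ) (x : Fin k → ℝ) (y : Fin l → ℝ) : ℝ :=
  ∑ i, ∑ j, x i * U i j * y j

/-- Regularized SCCP objective G(x,y) = -xᵀUy + μ/2 ‖x - xʳ‖² - μ/2 ‖y - yʳ‖². -/
noncomputable def sccpObj {k l : ℕ} (U : Matrix (Fin k) (Fin l) ℝ) (μ : ℝ)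
    (xr : Fin k → ℝ) (yr : Fin l → ℝ) (x : Fin k → ℝ) (y : Fin l → ℝ) : ℝ :=
  -(payoff U x y) + μ / 2 * sqnorm (x - xr) - μ / 2 * sqnorm (y - yr)

/-- (x̂, ŷ) is a saddle point of the SCCP with weight μ and reference (xr, yr). -/
def IsSaddle {k l : ℕ} (U : Matrix (Fin k) (Fin l) ℝ) (μ : ℝ)
    (xr : Fin k → ℝ) (yr : Fin l → ℝ) (xh : Fin k → ℝ) (yh : Fin l → ℝ) : Prop :=
  xh ∈ stdSimplex ℝ (Fin k) ∧ yh ∈ stdSimplex ℝ (Fin l) ∧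
  (∀ y ∈ stdSimplex ℝ (Fin l), sccpObj U μ xr yr xh y ≤ sccpObj U μ xr yr xh yh) ∧
  (∀ x ∈ stdSimplex ℝ (Fin k), sccpObj U μ xr yr xh yh ≤ sccpObj U μ xr yr x yh)

/-- (x*, y*) is a Nash equilibrium of the zero-sum game with payoff matrix U. -/
def IsNash {k l : ℕ} (U : Matrix (Fin k) (Fin l) ℝ)
    (xs : Fin k → ℝ) (ys : Fin l → ℝ) : Prop :=
  xs ∈ stdSimplex ℝ (Fin k) ∧ ys ∈ stdSimplex ℝ (Fin l) ∧
  (∀ x ∈ stdSimplex ℝ (Fin k), payoff U x ys ≤ payoff U xs ys) ∧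
  (∀ y ∈ stdSimplex ℝ (Fin l), payoff U xs ys ≤ payoff U xs y)

/-- Exploitability ε(σ) = max_{x'} x'ᵀUy - min_{y'} xᵀUy'. -/
noncomputable def exploit {k l : ℕ} (U : Matrix (Fin k) (Fin l) ℝ)
    (x : Fin k → ℝ) (y : Fin l → ℝ) : ℝ :=
  sSup ((fun x' => payoff U x' y) '' stdSimplex ℝ (Fin k)) -
  sInf ((fun y' => payoff U x y') '' stdSimplex ℝ (Fin l))

/-- Transformed loss for the x-player: ℓ_x = -Uy + μ(x - xʳ). -/
noncomputable def lossX {k l : ℕ} (U : Matrix (Fin k) (Fin l) ℝ) (μ : ℝ)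
    (xr : Fin k → ℝ) (x : Fin k → ℝ) (y : Fin l → ℝ) : Fin k → ℝ :=
  fun i => -(∑ j, U i j * y j) + μ * (x i - xr i)

/-- Transformed loss for the y-player: ℓ_y = Uᵀx + μ(y - yʳ). -/
noncomputable def lossY {k l : ℕ} (U : Matrix (Fin k) (Fin l) ℝ) (μ : ℝ)
    (yr : Fin l → ℝ) (x : Fin k → ℝ) (y : Fin l → ℝ) : Fin l → ℝ :=
  fun j => (∑ i, U i j * x i) + μ * (y j - yr j)

/-- Immediate regret r = ⟨ℓ, p⟩·𝟏 - ℓ. -/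
noncomputable def imRegret {k : ℕ} (ℓ : Fin k → ℝ) (p : Fin k → ℝ) : Fin k → ℝ :=
  fun i => (∑ i', ℓ i' * p i') - ℓ i


section Helpers

lemma payoff_row {k l : ℕ} (U : Matrix (Fin k) (Fin l) ℝ) (x : Fin k → ℝ) (y : Fin l → ℝ) :
    payoff U x y = ∑ i, x i * (∑ j, U i j * y j) := by
  simp [payoff, Finset.mul_sum, mul_assoc]

lemma payoff_col {k l : ℕ} (U : Matrix (Fin k) (Fin l) ℝ) (x : Fin k → ℝ) (y : Fin l → ℝ) :
    payoff U x y = ∑ j, (∑ i, x i * U i j) * y j := by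
  rw [payoff, Finset.sum_comm]
  simp [Finset.sum_mul]

lemma payoff_left_comb {k l : ℕ} (U : Matrix (Fin k) (Fin l) ℝ) (t : ℝ)
    (a b : Fin k → ℝ) (y : Fin l → ℝ) :
    payoff U ((1-t) • a + t • b) y = (1-t) * payoff U a y + t * payoff U b y := by
  simp only [payoff_row, Pi.add_apply, Pi.smul_apply, smul_eq_mul]
  rw [Finset.mul_sum, Finset.mul_sum, ← Finset.sum_add_distrib]
  exact Finset.sum_congr rfl fun i _ => by ring

lemma payoff_right_comb {k l : ℕ} (U : Matrix (Fin k) (Fin l) ℝ) (t : ℝ)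
    (x : Fin k → ℝ) (a b : Fin l → ℝ) :
    payoff U x ((1-t) • a + t • b) = (1-t) * payoff U x a + t * payoff U x b := by
  simp only [payoff_col, Pi.add_apply, Pi.smul_apply, smul_eq_mul]
  rw [Finset.mul_sum, Finset.mul_sum, ← Finset.sum_add_distrib]
  exact Finset.sum_congr rfl fun i _ => by ring

lemma sqnorm_comb {k : ℕ} (t : ℝ) (a b c : Fin k → ℝ) :
    sqnorm ((1-t) • a + t • b - c) =
      (1-t) * sqnorm (a - c) + t * sqnorm (b - c) - t * (1-t) * sqnorm (b - a) := by
  simp only [sqnorm, Finset.mul_sum, ← Finset.sum_add_distrib, ← Finset.sum_sub_distrib]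
  exact Finset.sum_congr rfl fun i _ => by
    simp only [Pi.add_apply, Pi.sub_apply, Pi.smul_apply, smul_eq_mul]; ring

lemma sqnorm_nonneg {k : ℕ} (v : Fin k → ℝ) : 0 ≤ sqnorm v :=
  Finset.sum_nonneg fun i _ => sq_nonneg _

lemma limit_lemma (c a : ℝ) (h : ∀ t : ℝ, t ∈ Set.Ioc (0:ℝ) 1 → c * (1 - t) ≤ a) : c ≤ a := by
  by_contra hlt
  push_neg at hlt
  have h1 := h 1 ⟨one_pos, le_refl 1⟩
  have ha : 0 ≤ a := by linarith
  have hc : 0 < c := lt_of_le_of_lt ha hlt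
  have ht : (c - a) / (2 * c) ∈ Set.Ioc (0:ℝ) 1 := by
    constructor
    · exact div_pos (by linarith) (by linarith)
    · rw [div_le_one (by positivity)]; linarith
  have h2 := h _ ht
  have h3 : c * (1 - (c - a) / (2 * c)) = (c + a) / 2 := by
    field_simp; ring
  linarith [h3 ▸ h2]

noncomputable def toE {k l : ℕ} (v : Fin k → ℝ) (w : Fin l → ℝ) :
    EuclideanSpace ℝ (Fin k ⊕ Fin l) :=
  (WithLp.equiv 2 _).symm (Sum.elim v w)

lemma pnorm_eq {k l : ℕ} (v : Fin k → ℝ) (w : Fin l → ℝ) : pnorm v w = ‖toE v w‖ := by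
  rw [EuclideanSpace.norm_eq, pnorm]
  congr 1
  rw [Fintype.sum_sum_type]
  simp [toE, sqnorm, sq_abs]

lemma toE_sub {k l : ℕ} (v1 v2 : Fin k → ℝ) (w1 w2 : Fin l → ℝ) :
    toE (v1 - v2) (w1 - w2) = toE v1 w1 - toE v2 w2 := by
  ext i
  cases i <;> simp [toE]

lemma pnorm_triangle {k l : ℕ} (a b c : Fin k → ℝ) (d e f : Fin l → ℝ) :
    pnorm (a - c) (d - f) ≤ pnorm (a - b) (d - e) + pnorm (b - c) (e - f) := by
  rw [pnorm_eq, pnorm_eq, pnorm_eq, toE_sub, toE_sub, toE_sub]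
  exact norm_sub_le_norm_sub_add_norm_sub _ _ _

end Helpers

/-- Triangle-inequality bound on the distance to the NE via the reference
exploitability and the distance to the saddle point. -/
theorem distance_bound_via_reference_exploitability
    {n m : ℕ} (hn : 0 < n) (hm : 0 < m)
    (U : Matrix (Fin n) (Fin m) ℝ) (μ : ℝ) (hμ : 0 < μ)
    (xs : Fin n → ℝ) (ys : Fin m → ℝ) (hNE : IsNash U xs ys)
    (xr : Fin n → ℝ) (yr : Fin m → ℝ)
    (hxr : xr ∈ stdSimplex ℝ (Fin n)) (hyr : yr ∈ stdSimplex ℝ (Fin m))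
    (xh : Fin n → ℝ) (yh : Fin m → ℝ)
    (hsad : IsSaddle U μ xr yr xh yh)
    (C : ℝ) (hC : 0 < C)
    (hMS : C * pnorm (xs - xr) (ys - yr) ≤ exploit U xr yr) :
    ∀ x ∈ stdSimplex ℝ (Fin n), ∀ y ∈ stdSimplex ℝ (Fin m),
      pnorm (xs - x) (ys - y) ≤ exploit U xr yr / C + pnorm (xh - x) (yh - y) := by
  obtain ⟨hxs, hys, hNx, hNy⟩ := hNE
  obtain ⟨hxh, hyh, hSy, hSx⟩ := hsad
  set G := sccpObj U μ xr yr with hG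
  -- Step 1: strong convexity bound on the x side
  have A1 : μ / 2 * sqnorm (xs - xh) ≤ G xs yh - G xh yh := by
    apply limit_lemma
    intro t ht
    have ht0 : 0 < t := ht.1
    have h1t : 0 ≤ 1 - t := by linarith [ht.2]
    have hmem : (1-t) • xh + t • xs ∈ stdSimplex ℝ (Fin n) :=
      (convex_stdSimplex ℝ (Fin n)) hxh hxs h1t (le_of_lt ht0) (by ring)
    have h41 := hSx _ hmem
    have e1 : G ((1-t) • xh + t • xs) yh
        = (1-t) * G xh yh + t * G xs yh - μ/2 * (t * (1-t) * sqnorm (xs - xh)) := by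
      simp only [hG, sccpObj, payoff_left_comb, sqnorm_comb]; ring
    rw [e1] at h41
    have key : t * (μ / 2 * sqnorm (xs - xh) * (1 - t)) ≤ t * (G xs yh - G xh yh) := by
      nlinarith [h41]
    exact le_of_mul_le_mul_left key ht0
  -- Step 2: strong concavity bound on the y side
  have A2 : μ / 2 * sqnorm (ys - yh) ≤ G xh yh - G xh ys := by
    apply limit_lemma
    intro t ht
    have ht0 : 0 < t := ht.1
    have h1t : 0 ≤ 1 - t := by linarith [ht.2]
    have hmem : (1-t) • yh + t • ys ∈ stdSimplex ℝ (Fin m) :=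
      (convex_stdSimplex ℝ (Fin m)) hyh hys h1t (le_of_lt ht0) (by ring)
    have h42 := hSy _ hmem
    have e2 : G xh ((1-t) • yh + t • ys)
        = (1-t) * G xh yh + t * G xh ys + μ/2 * (t * (1-t) * sqnorm (ys - yh)) := by
      simp only [hG, sccpObj, payoff_right_comb, sqnorm_comb]; ring
    rw [e2] at h42
    have key : t * (μ / 2 * sqnorm (ys - yh) * (1 - t)) ≤ t * (G xh yh - G xh ys) := by
      nlinarith [h42]
    exact le_of_mul_le_mul_left key ht0
  -- Step 3: Nash inequalities
  have N1 : payoff U xh ys ≤ payoff U xs ys := hNx xh hxh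
  have N2 : payoff U xs ys ≤ payoff U xs yh := hNy yh hyh
  -- Step 4: the saddle point is at least as close to the NE as the reference
  have key : sqnorm (xs - xh) + sqnorm (ys - yh) ≤ sqnorm (xs - xr) + sqnorm (ys - yr) := by
    have hGdiff : G xs yh - G xh ys
        ≤ μ / 2 * (sqnorm (xs - xr) + sqnorm (ys - yr)) := by
      simp only [hG, sccpObj]
      nlinarith [sqnorm_nonneg (xh - xr), sqnorm_nonneg (yh - yr)]
    have hsum : μ / 2 * (sqnorm (xs - xh) + sqnorm (ys - yh))
        ≤ μ / 2 * (sqnorm (xs - xr) + sqnorm (ys - yr)) := by linarith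
    have hμ2 : (0:ℝ) < μ / 2 := by linarith
    exact le_of_mul_le_mul_left (by linarith [hsum]) hμ2
  have hclose : pnorm (xs - xh) (ys - yh) ≤ pnorm (xs - xr) (ys - yr) := by
    exact Real.sqrt_le_sqrt key
  have href : pnorm (xs - xr) (ys - yr) ≤ exploit U xr yr / C := by
    rw [le_div_iff₀ hC]
    linarith [hMS]
  intro x hx y hy
  calc pnorm (xs - x) (ys - y)
      ≤ pnorm (xs - xh) (ys - yh) + pnorm (xh - x) (yh - y) :=
        pnorm_triangle xs xh x ys yh y
    _ ≤ exploit U xr yr / C + pnorm (xh - x) (yh - y) := by linarith
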